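/- The improper integral ∫₀^∞ (log x)/(x² - 1) dx converges and equals π²/4; in particular it is bounded above by π²/4 ≤ 5/2. -/

import Mathlib

open Real MeasureTheory Set Filter Topology

/-- FTC computation: `∫₁^∞ log x / x^(2n+2) dx = 1/(2n+1)²`. -/
lemma aux_deriv (n : ℕ) (y : ℝ) (hy : y ∈ Ici (1:ℝ)) :
    HasDerivAt (fun y : ℝ => -((1/(2*(n:ℝ)+1)) * (Real.log y * ((y^(2*n+1) : ℝ))⁻¹))
        - (1/(2*(n:ℝ)+1)^2) * ((y^(2*n+1) : ℝ))⁻¹)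
      (Real.log y / y ^ (2*n+2)) y := by
  have hy0 : (0:ℝ) < y := lt_of_lt_of_le one_pos hy
  have hyne : y ≠ 0 := hy0.ne'
  have hpow : HasDerivAt (fun y : ℝ => y ^ (2*n+1)) ((2*(n:ℝ)+1) * y ^ (2*n)) y := by
    have := hasDerivAt_pow (2*n+1) y
    simpa [Nat.add_sub_cancel, mul_comm] using this
  have hinv : HasDerivAt (fun y : ℝ => ((y^(2*n+1) : ℝ))⁻¹)
      (-((2*(n:ℝ)+1) * y ^ (2*n)) / (y^(2*n+1))^2) y := hpow.inv (pow_ne_zero _ hyne)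
  have hlog : HasDerivAt Real.log y⁻¹ y := Real.hasDerivAt_log hyne
  have hmul := hlog.mul hinv
  have h := ((hmul.const_mul (1/(2*(n:ℝ)+1))).neg).sub (hinv.const_mul (1/(2*(n:ℝ)+1)^2))
  refine h.congr_deriv ?_
  have hc : (2*(n:ℝ)+1) ≠ 0 := by positivity
  field_simp
  ring

lemma aux_tendsto (n : ℕ) :
    Tendsto (fun y : ℝ => -((1/(2*(n:ℝ)+1)) * (Real.log y * ((y^(2*n+1) : ℝ))⁻¹))
        - (1/(2*(n:ℝ)+1)^2) * ((y^(2*n+1) : ℝ))⁻¹) atTop (𝓝 0) := by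
  have t1 : Tendsto (fun y : ℝ => Real.log y * ((y^(2*n+1) : ℝ))⁻¹) atTop (𝓝 0) := by
    have hlim : Tendsto (fun y : ℝ => Real.log y / y) atTop (𝓝 0) := by
      simpa using Real.isLittleO_log_id_atTop.tendsto_div_nhds_zero
    apply squeeze_zero' ?_ ?_ hlim
    · filter_upwards [eventually_ge_atTop (1:ℝ)] with y hy
      have : (0:ℝ) < y ^ (2*n+1) := pow_pos (lt_of_lt_of_le one_pos hy) _
      have hl : 0 ≤ Real.log y := Real.log_nonneg hy
      positivity
    · filter_upwards [eventually_ge_atTop (1:ℝ)] with y hy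
      have hy0 : (0:ℝ) < y := lt_of_lt_of_le one_pos hy
      have hle : y ≤ y ^ (2*n+1) := le_self_pow₀ hy (by omega)
      rw [← div_eq_mul_inv]
      exact div_le_div_of_nonneg_left (Real.log_nonneg hy) hy0 hle
  have t2 : Tendsto (fun y : ℝ => ((y^(2*n+1) : ℝ))⁻¹) atTop (𝓝 0) :=
    (tendsto_pow_atTop (by omega)).inv_tendsto_atTop
  have h := ((t1.const_mul (1/(2*(n:ℝ)+1))).neg).sub (t2.const_mul (1/(2*(n:ℝ)+1)^2))
  have h0 : -((1/(2*(n:ℝ)+1)) * 0) - (1/(2*(n:ℝ)+1)^2) * 0 = (0:ℝ) := by ring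
  rw [← h0]
  exact h

lemma aux_nonneg (n : ℕ) : ∀ y ∈ Ioi (1:ℝ), 0 ≤ Real.log y / y ^ (2*n+2) := by
  intro y hy
  have hy1 : (1:ℝ) < y := hy
  have : (0:ℝ) < y ^ (2*n+2) := pow_pos (lt_trans one_pos hy1) _
  exact div_nonneg (Real.log_nonneg hy1.le) this.le

lemma aux_integrable (n : ℕ) :
    IntegrableOn (fun x : ℝ => Real.log x / x ^ (2*n+2)) (Ioi 1) :=
  integrableOn_Ioi_deriv_of_nonneg' (aux_deriv n) (aux_nonneg n) (aux_tendsto n)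

lemma aux_integral (n : ℕ) :
    ∫ x in Ioi (1:ℝ), Real.log x / x ^ (2*n+2) = 1/(2*(n:ℝ)+1)^2 := by
  rw [integral_Ioi_of_hasDerivAt_of_nonneg' (aux_deriv n) (aux_nonneg n) (aux_tendsto n)]
  norm_num

lemma aux_hasSum : HasSum (fun n : ℕ => 1/(2*(n:ℝ)+1)^2) (π^2/8) := by
  have htot : HasSum (fun n : ℕ => (1 : ℝ) / (n : ℝ) ^ 2) (π ^ 2 / 6) := hasSum_zeta_two
  have heven : HasSum (fun n : ℕ => (1 : ℝ) / (2*(n:ℝ)) ^ 2) (π ^ 2 / 24) := by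
    have h := htot.mul_left (1/4)
    have e1 : (1:ℝ)/4 * (π^2/6) = π^2/24 := by ring
    rw [e1] at h
    rw [show (fun n : ℕ => (1:ℝ) / (2*(n:ℝ)) ^ 2) = fun n : ℕ => 1/4 * (1 / (n:ℝ) ^ 2) from
      funext fun n => by ring]
    exact h
  have hsum_odd : Summable (fun n : ℕ => 1/(2*(n:ℝ)+1)^2) := by
    apply Summable.of_nonneg_of_le (fun n => by positivity) (fun n => ?_)
      (htot.summable.comp_injective Nat.succ_injective)
    simp only [Function.comp_apply]
    apply div_le_div_of_nonneg_left zero_le_one (by positivity)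
    push_cast
    nlinarith [Nat.cast_nonneg (α := ℝ) n]
  have hodd := hsum_odd.hasSum
  have hcomb : HasSum (fun n : ℕ => (1 : ℝ) / (n : ℝ) ^ 2)
      (π ^ 2 / 24 + ∑' n : ℕ, 1/(2*(n:ℝ)+1)^2) := by
    refine HasSum.even_add_odd ?_ ?_
    · convert heven using 2 with n; push_cast; ring
    · convert hodd using 2 with n; push_cast; ring
  have := htot.unique hcomb
  have : ∑' n : ℕ, 1/(2*(n:ℝ)+1)^2 = π^2/8 := by linarith
  rwa [← this]

lemma aux_meas : Measurable (fun x : ℝ => Real.log x / (x ^ 2 - 1)) :=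
  Real.measurable_log.div ((measurable_id.pow_const 2).sub measurable_const)

lemma aux_hasSum_pt {x : ℝ} (hx : 1 < x) :
    HasSum (fun n : ℕ => Real.log x / x ^ (2*n+2)) (Real.log x / (x ^ 2 - 1)) := by
  have hx0 : (0:ℝ) < x := lt_trans one_pos hx
  have hr0 : (0:ℝ) ≤ (x^2)⁻¹ := by positivity
  have hr1 : (x^2)⁻¹ < 1 := by
    rw [inv_lt_one_iff₀]; right; nlinarith
  have hgeom : HasSum (fun n : ℕ => ((x^2)⁻¹)^n) (1 - (x^2)⁻¹)⁻¹ :=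
    hasSum_geometric_of_lt_one hr0 hr1
  have h := hgeom.mul_left (Real.log x * (x^2)⁻¹)
  have hx2 : x^2 - 1 ≠ 0 := by nlinarith
  have hx2' : (x:ℝ)^2 ≠ 0 := by positivity
  have e1 : (fun n : ℕ => Real.log x * (x^2)⁻¹ * ((x^2)⁻¹)^n)
      = fun n : ℕ => Real.log x / x ^ (2*n+2) := by
    funext n
    rw [← inv_pow, ← pow_mul]
    rw [div_eq_mul_inv, pow_add, mul_inv]
    ring
  have e2 : Real.log x * (x^2)⁻¹ * (1 - (x^2)⁻¹)⁻¹ = Real.log x / (x ^ 2 - 1) := by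
    have e3 : 1 - (x^2)⁻¹ = (x^2-1)/x^2 := by field_simp
    rw [e3, inv_div]
    field_simp
  rw [e1, e2] at h
  exact h

lemma aux_Ioi1 :
    IntegrableOn (fun x : ℝ => Real.log x / (x ^ 2 - 1)) (Ioi 1) ∧
    ∫ x in Ioi (1:ℝ), Real.log x / (x ^ 2 - 1) = π^2/8 := by
  set f : ℝ → ℝ := fun x => Real.log x / (x ^ 2 - 1) with hf
  have hnn : ∀ x ∈ Ioi (1:ℝ), 0 ≤ f x := by
    intro x hx
    have hx1 : (1:ℝ) < x := hx
    have h1 : 0 ≤ Real.log x := Real.log_nonneg hx1.le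
    have h2 : (0:ℝ) < x^2 - 1 := by nlinarith
    exact div_nonneg h1 h2.le
  have hnn_ae : 0 ≤ᵐ[volume.restrict (Ioi (1:ℝ))] f :=
    (ae_restrict_iff' measurableSet_Ioi).2 (ae_of_all _ hnn)
  have hgm : ∀ n : ℕ, Measurable fun x : ℝ => ENNReal.ofReal (Real.log x / x ^ (2*n+2)) :=
    fun n => (Real.measurable_log.div (measurable_id.pow_const _)).ennreal_ofReal
  have L : ∫⁻ x in Ioi (1:ℝ), ENNReal.ofReal (f x) = ENNReal.ofReal (π^2/8) := by
    have step1 : ∫⁻ x in Ioi (1:ℝ), ENNReal.ofReal (f x)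
        = ∫⁻ x in Ioi (1:ℝ), ∑' n : ℕ, ENNReal.ofReal (Real.log x / x ^ (2*n+2)) := by
      apply setLIntegral_congr_fun measurableSet_Ioi
      intro x hx
      have hx1 : (1:ℝ) < x := hx
      have hs := aux_hasSum_pt hx1
      have hnng : ∀ n : ℕ, 0 ≤ Real.log x / x ^ (2*n+2) := fun n =>
        div_nonneg (Real.log_nonneg hx1.le) (by positivity)
      show ENNReal.ofReal (Real.log x / (x ^ 2 - 1)) = _
      rw [← hs.tsum_eq, ENNReal.ofReal_tsum_of_nonneg hnng hs.summable]
    rw [step1, lintegral_tsum fun n => (hgm n).aemeasurable]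
    have step2 : ∀ n : ℕ, ∫⁻ x in Ioi (1:ℝ), ENNReal.ofReal (Real.log x / x ^ (2*n+2))
        = ENNReal.ofReal (1/(2*(n:ℝ)+1)^2) := by
      intro n
      rw [← ofReal_integral_eq_lintegral_ofReal (aux_integrable n)
        ((ae_restrict_iff' measurableSet_Ioi).2 (ae_of_all _ (aux_nonneg n))), aux_integral n]
    simp_rw [step2]
    rw [← ENNReal.ofReal_tsum_of_nonneg (fun n => by positivity) aux_hasSum.summable,
      aux_hasSum.tsum_eq]
  have hint : IntegrableOn f (Ioi 1) := by
    refine ⟨aux_meas.aestronglyMeasurable, ?_⟩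
    rw [hasFiniteIntegral_iff_ofReal hnn_ae, L]
    exact ENNReal.ofReal_lt_top
  refine ⟨hint, ?_⟩
  rw [integral_eq_lintegral_of_nonneg_ae hnn_ae aux_meas.aestronglyMeasurable.restrict, L,
    ENNReal.toReal_ofReal (by positivity)]

lemma aux_subst_eq : ∀ x ∈ Ioi (0:ℝ),
    (|(-1:ℝ)| * x ^ ((-1:ℝ) - 1)) • ((Ioi (1:ℝ)).indicator (fun x : ℝ => Real.log x / (x ^ 2 - 1))) (x ^ (-1:ℝ))
      = (Ioo (0:ℝ) 1).indicator (fun x : ℝ => Real.log x / (x ^ 2 - 1)) x := by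
  intro x hx
  have hx0 : (0:ℝ) < x := hx
  have hinv : x ^ (-1:ℝ) = x⁻¹ := Real.rpow_neg_one x
  have hpow : x ^ ((-1:ℝ) - 1) = (x^2)⁻¹ := by
    rw [show ((-1:ℝ) - 1) = -(2:ℕ) by norm_num, Real.rpow_neg hx0.le, Real.rpow_natCast]
  rw [hinv, hpow, abs_neg, abs_one, one_mul, smul_eq_mul]
  rcases lt_or_ge x 1 with hlt | hge
  · have hmem1 : x⁻¹ ∈ Ioi (1:ℝ) := by
      simp only [mem_Ioi]
      rw [lt_inv_comm₀ one_pos hx0]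
      simpa using hlt
    have hmem2 : x ∈ Ioo (0:ℝ) 1 := ⟨hx0, hlt⟩
    rw [indicator_of_mem hmem1, indicator_of_mem hmem2]
    have hxne : x ≠ 0 := hx0.ne'
    have hne : x^2 - 1 ≠ 0 := by nlinarith
    have hne2 : (1:ℝ) - x^2 ≠ 0 := by nlinarith
    rw [Real.log_inv, inv_pow, show (x^2)⁻¹ - 1 = (1 - x^2)/x^2 by field_simp, div_div_eq_mul_div]
    field_simp
    ring
  · have hmem1 : x⁻¹ ∉ Ioi (1:ℝ) := by
      simp only [mem_Ioi, not_lt]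
      exact inv_le_one_of_one_le₀ hge
    have hmem2 : x ∉ Ioo (0:ℝ) 1 := fun h => absurd h.2 (not_lt.2 hge)
    rw [indicator_of_notMem hmem1, indicator_of_notMem hmem2, mul_zero]

lemma aux_Ioo01 :
    IntegrableOn (fun x : ℝ => Real.log x / (x ^ 2 - 1)) (Ioo 0 1) ∧
    ∫ x in Ioo (0:ℝ) 1, Real.log x / (x ^ 2 - 1) = π^2/8 := by
  set f : ℝ → ℝ := fun x => Real.log x / (x ^ 2 - 1) with hf
  set F : ℝ → ℝ := (Ioi (1:ℝ)).indicator f with hF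
  have hFvol : Integrable F volume := by
    rw [hF, integrable_indicator_iff measurableSet_Ioi]
    exact aux_Ioi1.1
  have hFi : IntegrableOn F (Ioi 0) := hFvol.integrableOn
  have hsub := (integrableOn_Ioi_comp_rpow_iff F (p := -1) (by norm_num)).2 hFi
  have hind : IntegrableOn ((Ioo (0:ℝ) 1).indicator f) (Ioi 0) := by
    apply hsub.congr_fun aux_subst_eq measurableSet_Ioi
  have hint : IntegrableOn f (Ioo 0 1) := by
    have := (integrable_indicator_iff measurableSet_Ioo).1 hind
    rwa [IntegrableOn, Measure.restrict_restrict measurableSet_Ioo,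
      inter_eq_left.2 (Ioo_subset_Ioi_self)] at this
  refine ⟨hint, ?_⟩
  have hval : ∫ x in Ioi (0:ℝ), (Ioo (0:ℝ) 1).indicator f x
      = ∫ x in Ioi (0:ℝ), F x := by
    rw [← setIntegral_congr_fun measurableSet_Ioi aux_subst_eq]
    exact integral_comp_rpow_Ioi F (p := -1) (by norm_num)
  rw [integral_indicator measurableSet_Ioo, Measure.restrict_restrict measurableSet_Ioo,
    inter_eq_left.2 (Ioo_subset_Ioi_self)] at hval
  rw [hF, integral_indicator measurableSet_Ioi, Measure.restrict_restrict measurableSet_Ioi,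
    inter_eq_left.2 (Ioi_subset_Ioi zero_le_one)] at hval
  rw [hval]
  exact aux_Ioi1.2

theorem stmt_3 :
    IntegrableOn (fun x : ℝ => Real.log x / (x ^ 2 - 1)) (Ioi 0) ∧
    (∫ x in Ioi (0 : ℝ), Real.log x / (x ^ 2 - 1)) = π ^ 2 / 4 ∧
    π ^ 2 / 4 ≤ 5 / 2 := by
  set f : ℝ → ℝ := fun x => Real.log x / (x ^ 2 - 1) with hf
  have hsplit : Ioi (0:ℝ) = Ioo 0 1 ∪ Ici 1 := by
    ext x
    simp only [mem_Ioi, mem_union, mem_Ioo, mem_Ici]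
    constructor
    · intro h; rcases lt_or_ge x 1 with h1 | h1
      · exact Or.inl ⟨h, h1⟩
      · exact Or.inr h1
    · rintro (⟨h, _⟩ | h)
      · exact h
      · linarith
  have hIci : IntegrableOn f (Ici 1) := by
    rw [integrableOn_Ici_iff_integrableOn_Ioi]
    exact aux_Ioi1.1
  have hint : IntegrableOn f (Ioi 0) := by
    rw [hsplit]
    exact aux_Ioo01.1.union hIci
  have hdisj : Disjoint (Ioo (0:ℝ) 1) (Ici 1) := by
    rw [disjoint_left]
    rintro x ⟨_, h1⟩ h2
    exact absurd h2 (not_le.2 h1)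
  have hval : ∫ x in Ioi (0:ℝ), f x = π^2/4 := by
    rw [hsplit, setIntegral_union hdisj measurableSet_Ici aux_Ioo01.1 hIci,
      aux_Ioo01.2, integral_Ici_eq_integral_Ioi, aux_Ioi1.2]
    ring
  refine ⟨hint, hval, ?_⟩
  nlinarith [Real.pi_lt_d2, Real.pi_pos]
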